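/- Let G be a group generated by a finite set S, let p > q ≥ 1, and let f : G → ℝ be finitely supported. Then h = |f|^{p/q} has the same support as f and satisfies ‖∇h‖_q / ‖h‖_q ≤ 2^{1/q} · |S|^{(p−q)/(pq)} · (p/q) · ‖∇f‖_p / ‖f‖_p, provided f is not identically zero. -/

import Mathlib

lemma aux_pow_sub {x y α : ℝ} (hy : 0 ≤ y) (hxy : y ≤ x) (hα : 1 ≤ α) :
    x ^ α - y ^ α ≤ α * (x - y) * x ^ (α - 1) := by
  have hx : 0 ≤ x := hy.trans hxy
  rcases hx.eq_or_lt with h0 | h0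
  · have hy0 : y = 0 := le_antisymm (hxy.trans h0.ge) hy
    subst hy0
    rw [← h0, Real.zero_rpow (by linarith : α ≠ 0)]
    simp
  · have hs : -1 ≤ y / x - 1 := by
      have : 0 ≤ y / x := div_nonneg hy h0.le
      linarith
    have hb := one_add_mul_self_le_rpow_one_add hs hα
    rw [show (1 + (y / x - 1)) = y / x by ring] at hb
    have hxα : (0:ℝ) < x ^ α := Real.rpow_pos_of_pos h0 α
    have h2 : x ^ α + α * (y / x - 1) * x ^ α ≤ y ^ α := by
      calc x ^ α + α * (y / x - 1) * x ^ α = (1 + α * (y / x - 1)) * x ^ α := by ring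
        _ ≤ (y / x) ^ α * x ^ α := by
            exact mul_le_mul_of_nonneg_right hb hxα.le
        _ = y ^ α := by
            rw [Real.div_rpow hy h0.le, div_mul_cancel₀ _ hxα.ne']
    have hxsplit : x ^ α = x * x ^ (α - 1) := by
      rw [← Real.rpow_one_add' h0.le (by linarith : 1 + (α - 1) ≠ 0)]
      ring_nf
    have heq : α * (x - y) * x ^ (α - 1) = -(α * (y / x - 1) * x ^ α) := by
      rw [hxsplit]; field_simp; ring
    linarith

lemma aux_key {α : ℝ} (hα : 1 ≤ α) (a b : ℝ) :
    abs (|a| ^ α - |b| ^ α) ≤ α * |a - b| * max |a| |b| ^ (α - 1) := by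
  wlog h : |b| ≤ |a| with H
  · have := H hα b a (le_of_not_ge h)
    rwa [abs_sub_comm, abs_sub_comm b a, max_comm] at this
  · have h1 : |b| ^ α ≤ |a| ^ α := Real.rpow_le_rpow (abs_nonneg b) h (by linarith)
    rw [abs_of_nonneg (by linarith), max_eq_left h]
    calc |a| ^ α - |b| ^ α ≤ α * (|a| - |b|) * |a| ^ (α - 1) :=
          aux_pow_sub (abs_nonneg b) h hα
      _ ≤ α * |a - b| * |a| ^ (α - 1) := by
          gcongr
          exact abs_sub_abs_le_abs_sub a b

lemma aux_step5 {A B X q p : ℝ} (hA : 0 ≤ A) (hB : 0 ≤ B) (hX : 0 ≤ X)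
    (hq : 0 < q) (hp : 0 < p) :
    (A ^ q * (B ^ (q / p) * X ^ ((p - q) / p))) ^ (1 / q)
      = A * B ^ (1 / p) * X ^ ((p - q) / (p * q)) := by
  rw [Real.mul_rpow (Real.rpow_nonneg hA _)
      (mul_nonneg (Real.rpow_nonneg hB _) (Real.rpow_nonneg hX _)),
    Real.mul_rpow (Real.rpow_nonneg hB _) (Real.rpow_nonneg hX _),
    ← Real.rpow_mul hA, mul_one_div_cancel hq.ne', Real.rpow_one,
    ← Real.rpow_mul hB, ← Real.rpow_mul hX,
    show q / p * (1 / q) = 1 / p by field_simp,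
    show (p - q) / p * (1 / q) = (p - q) / (p * q) by rw [div_mul_div_comm, mul_one],
    mul_assoc]

set_option maxHeartbeats 1000000 in
/-- Let `G` be a group generated by a finite set `S`, let `p > q ≥ 1`, and let
`f : G → ℝ` be finitely supported and not identically zero. Then
`h = |f|^(p/q)` has the same support as `f` and satisfies
`‖∇h‖_q / ‖h‖_q ≤ 2^(1/q) · |S|^((p−q)/(pq)) · (p/q) · ‖∇f‖_p / ‖f‖_p`, where
`∇u(g,s) = u(g) − u(gs)` and the `ℓ^p` norms are as usual. -/
theorem stmt_2 (G : Type*) [Group G] (S : Finset G)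
    (hgen : Subgroup.closure (S : Set G) = ⊤)
    (p q : ℝ) (hq : 1 ≤ q) (hpq : q < p)
    (f : G → ℝ) (hf : (Function.support f).Finite) (hf0 : f ≠ 0) :
    Function.support (fun g : G => |f g| ^ (p / q)) = Function.support f ∧
    (∑' g : G, ∑ s ∈ S, |(|f g| ^ (p / q)) - (|f (g * s)| ^ (p / q))| ^ q) ^ (1 / q)
        / (∑' g : G, |(|f g| ^ (p / q))| ^ q) ^ (1 / q)
      ≤ 2 ^ (1 / q) * (S.card : ℝ) ^ ((p - q) / (p * q)) * (p / q) *
          ((∑' g : G, ∑ s ∈ S, |f g - f (g * s)| ^ p) ^ (1 / p)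
            / (∑' g : G, |f g| ^ p) ^ (1 / p)) := by
  have hq0 : (0:ℝ) < q := by linarith
  have hp0 : (0:ℝ) < p := by linarith
  have hpq0 : (0:ℝ) < p - q := by linarith
  set α : ℝ := p / q with hαdef
  have hα1 : 1 < α := (one_lt_div hq0).2 hpq
  have hα0 : (0:ℝ) < α := by linarith
  have hαq : α * q = p := div_mul_cancel₀ p hq0.ne'
  -- support equality
  have hsupp : Function.support (fun g : G => |f g| ^ (p / q)) = Function.support f := by
    ext g
    simp only [Function.mem_support, ne_eq]
    rw [Real.rpow_eq_zero (abs_nonneg _) (by positivity : p / q ≠ 0), abs_eq_zero]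
  refine ⟨hsupp, ?_⟩
  classical
  set T : Finset G := hf.toFinset with hTdef
  have hT : ∀ g, g ∉ T → f g = 0 := by
    intro g hg
    by_contra h
    exact hg (hf.mem_toFinset.2 h)
  set F : Finset G := T ∪ (T ×ˢ S).image (fun x : G × G => x.1 * x.2⁻¹) with hFdef
  have hTF : T ⊆ F := Finset.subset_union_left
  have hF1 : ∀ g, g ∉ F → f g = 0 := fun g hg =>
    hT g (fun h => hg (hTF h))
  have hF2 : ∀ g, g ∉ F → ∀ s ∈ S, f (g * s) = 0 := by
    intro g hg s hs
    by_contra h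
    apply hg
    refine Finset.mem_union_right _ (Finset.mem_image.2 ⟨(g * s, s), ?_, by group⟩)
    exact Finset.mem_product.2 ⟨hf.mem_toFinset.2 h, hs⟩
  set P : Finset (G × G) := F ×ˢ S with hPdef
  set Df : ℝ := ∑ g ∈ T, |f g| ^ p with hDf
  set Nf : ℝ := ∑ x ∈ P, |f x.1 - f (x.1 * x.2)| ^ p with hNf
  set Nh : ℝ := ∑ x ∈ P, abs (|f x.1| ^ α - |f (x.1 * x.2)| ^ α) ^ q with hNh
  have hDfpos : 0 < Df := by
    obtain ⟨g, hg⟩ : ∃ g, f g ≠ 0 := Function.ne_iff.1 hf0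
    have hgT : g ∈ T := hf.mem_toFinset.2 hg
    have : 0 < |f g| ^ p := Real.rpow_pos_of_pos (abs_pos.2 hg) p
    calc (0:ℝ) < |f g| ^ p := this
      _ ≤ Df := Finset.single_le_sum (f := fun g => |f g| ^ p) (fun i _ => by positivity) hgT
  -- tsum identifications
  have h1 : (∑' g : G, ∑ s ∈ S, |(|f g| ^ (p / q)) - (|f (g * s)| ^ (p / q))| ^ q) = Nh := by
    rw [tsum_eq_sum (s := F) ?_]
    · rw [hNh, hPdef, Finset.sum_product]
    · intro g hg
      refine Finset.sum_eq_zero fun s hs => ?_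
      rw [hF1 g hg, hF2 g hg s hs]
      simp [Real.zero_rpow (by positivity : p / q ≠ 0), Real.zero_rpow hq0.ne']
  have h2 : (∑' g : G, |(|f g| ^ (p / q))| ^ q) = Df := by
    rw [tsum_eq_sum (s := T) ?_]
    · refine Finset.sum_congr rfl fun g _ => ?_
      rw [abs_of_nonneg (by positivity), ← Real.rpow_mul (abs_nonneg _),
        div_mul_cancel₀ _ hq0.ne']
    · intro g hg
      rw [hT g hg]
      simp [Real.zero_rpow (by positivity : p / q ≠ 0), Real.zero_rpow hq0.ne']
  have h3 : (∑' g : G, ∑ s ∈ S, |f g - f (g * s)| ^ p) = Nf := by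
    rw [tsum_eq_sum (s := F) ?_]
    · rw [hNf, hPdef, Finset.sum_product]
    · intro g hg
      refine Finset.sum_eq_zero fun s hs => ?_
      rw [hF1 g hg, hF2 g hg s hs]
      simp [Real.zero_rpow hp0.ne']
  have h4 : (∑' g : G, |f g| ^ p) = Df := by
    rw [tsum_eq_sum (s := T) ?_]
    intro g hg
    rw [hT g hg]
    simp [Real.zero_rpow hp0.ne']
  rw [h1, h2, h3, h4]
  have hNfnn : 0 ≤ Nf := Finset.sum_nonneg fun x _ => by positivity
  have hNhnn : 0 ≤ Nh := Finset.sum_nonneg fun x _ => by positivity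
  have hMnn : ∀ x : G × G, (0:ℝ) ≤ max |f x.1| |f (x.1 * x.2)| :=
    fun x => (abs_nonneg _).trans (le_max_left _ _)
  -- Step 1: pointwise bound
  have step1 : Nh ≤ α ^ q * ∑ x ∈ P,
      |f x.1 - f (x.1 * x.2)| ^ q * max |f x.1| |f (x.1 * x.2)| ^ (p - q) := by
    rw [Finset.mul_sum, hNh]
    refine Finset.sum_le_sum fun x _ => ?_
    have k := aux_key hα1.le (f x.1) (f (x.1 * x.2))
    have k2 := Real.rpow_le_rpow (abs_nonneg _) k hq0.le
    refine k2.trans_eq ?_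
    rw [Real.mul_rpow (mul_nonneg hα0.le (abs_nonneg _)) (Real.rpow_nonneg (hMnn x) _),
      Real.mul_rpow hα0.le (abs_nonneg _), ← Real.rpow_mul (hMnn x),
      show (α - 1) * q = p - q by rw [sub_mul, one_mul, hαq]]
    ring
  -- Step 2: Hölder
  have hconj : Real.HolderConjugate (p / q) (p / (p - q)) := by
    rw [Real.holderConjugate_iff]
    constructor
    · exact hα1
    · rw [inv_div, inv_div]
      field_simp
      ring
  have step2 : ∑ x ∈ P,
      |f x.1 - f (x.1 * x.2)| ^ q * max |f x.1| |f (x.1 * x.2)| ^ (p - q) ≤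
      Nf ^ (q / p) * (∑ x ∈ P, max |f x.1| |f (x.1 * x.2)| ^ p) ^ ((p - q) / p) := by
    have H := Real.inner_le_Lp_mul_Lq_of_nonneg (s := P)
      (f := fun x => |f x.1 - f (x.1 * x.2)| ^ q)
      (g := fun x => max |f x.1| |f (x.1 * x.2)| ^ (p - q)) hconj
      (fun i _ => by positivity) (fun i _ => Real.rpow_nonneg (hMnn i) _)
    refine H.trans_eq ?_
    rw [one_div_div, one_div_div]
    congr 2
    · refine Finset.sum_congr rfl fun x _ => ?_
      rw [← Real.rpow_mul (abs_nonneg _), mul_comm, div_mul_cancel₀ _ hq0.ne']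
    · refine Finset.sum_congr rfl fun x _ => ?_
      rw [← Real.rpow_mul (hMnn x), mul_comm, div_mul_cancel₀ _ hpq0.ne']
  -- Step 3
  have hFT : ∑ g ∈ F, |f g| ^ p = Df := by
    refine (Finset.sum_subset hTF fun g _ hg => ?_).symm
    rw [hT g hg, abs_zero, Real.zero_rpow hp0.ne']
  have step3 : (∑ x ∈ P, max |f x.1| |f (x.1 * x.2)| ^ p) ≤ 2 * S.card * Df := by
    have hmax : ∀ a b : ℝ, (max |a| |b|) ^ p ≤ |a| ^ p + |b| ^ p := by
      intro a b
      rcases le_total |a| |b| with h | h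
      · rw [max_eq_right h]; exact le_add_of_nonneg_left (by positivity)
      · rw [max_eq_left h]; exact le_add_of_nonneg_right (by positivity)
    have hA : ∑ x ∈ P, |f x.1| ^ p = S.card * Df := by
      rw [hPdef, Finset.sum_product]
      simp only [Finset.sum_const, nsmul_eq_mul]
      rw [← Finset.mul_sum, hFT]
    have hB : ∑ x ∈ P, |f (x.1 * x.2)| ^ p ≤ S.card * Df := by
      rw [hPdef, Finset.sum_product, Finset.sum_comm]
      have hinner : ∀ s ∈ S, ∑ g ∈ F, |f (g * s)| ^ p ≤ Df := by
        intro s _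
        rw [← Finset.sum_image (g := fun t => t * s) (f := fun x => |f x| ^ p)
          (fun a _ b _ (h : a * s = b * s) => mul_right_cancel h)]
        have hz : ∑ g' ∈ F.image (fun g => g * s), |f g'| ^ p
            = ∑ g' ∈ F.image (fun g => g * s) ∩ T, |f g'| ^ p := by
          refine (Finset.sum_subset Finset.inter_subset_left fun g hgA hg => ?_).symm
          have hgT : g ∉ T := fun h => hg (Finset.mem_inter.2 ⟨hgA, h⟩)
          rw [hT g hgT, abs_zero, Real.zero_rpow hp0.ne']
        rw [hz]
        exact Finset.sum_le_sum_of_subset_of_nonneg Finset.inter_subset_right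
          (fun i _ _ => by positivity)
      calc ∑ s ∈ S, ∑ g ∈ F, |f (g * s)| ^ p ≤ ∑ s ∈ S, Df :=
            Finset.sum_le_sum hinner
        _ = S.card * Df := by rw [Finset.sum_const, nsmul_eq_mul]
    calc ∑ x ∈ P, max |f x.1| |f (x.1 * x.2)| ^ p
        ≤ ∑ x ∈ P, (|f x.1| ^ p + |f (x.1 * x.2)| ^ p) :=
          Finset.sum_le_sum fun x _ => hmax _ _
      _ = (∑ x ∈ P, |f x.1| ^ p) + ∑ x ∈ P, |f (x.1 * x.2)| ^ p :=
          Finset.sum_add_distrib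
      _ ≤ S.card * Df + S.card * Df := by rw [hA]; exact add_le_add_right hB _
      _ = 2 * S.card * Df := by ring
  -- Step 4: combine
  have hMsum : (0:ℝ) ≤ ∑ x ∈ P, max |f x.1| |f (x.1 * x.2)| ^ p :=
    Finset.sum_nonneg fun x _ => Real.rpow_nonneg (hMnn x) _
  have hcard : (0:ℝ) ≤ (S.card : ℝ) := Nat.cast_nonneg _
  have hXnn : (0:ℝ) ≤ 2 * S.card * Df := by positivity
  have step4 : Nh ≤ α ^ q * (Nf ^ (q / p) * (2 * S.card * Df) ^ ((p - q) / p)) := by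
    refine step1.trans ?_
    refine mul_le_mul_of_nonneg_left (step2.trans ?_) (Real.rpow_nonneg hα0.le _)
    refine mul_le_mul_of_nonneg_left ?_ (Real.rpow_nonneg hNfnn _)
    exact Real.rpow_le_rpow hMsum step3 (by positivity)
  set e : ℝ := (p - q) / (p * q) with he
  have hediff : e = 1 / q - 1 / p := by
    rw [he, div_sub_div _ _ hq0.ne' hp0.ne', one_mul, mul_one, mul_comm q p]
  have step5 : Nh ^ (1 / q) ≤ α * Nf ^ (1 / p) * 2 ^ e * (S.card : ℝ) ^ e * Df ^ e := by
    have h5 := Real.rpow_le_rpow hNhnn step4 (le_of_lt (by positivity : (0:ℝ) < 1 / q))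
    rw [aux_step5 hα0.le hNfnn hXnn hq0 hp0] at h5
    refine h5.trans_eq ?_
    rw [he, Real.mul_rpow (by positivity : (0:ℝ) ≤ 2 * (S.card:ℝ)) hDfpos.le,
      Real.mul_rpow (by norm_num : (0:ℝ) ≤ 2) hcard]
    ring
  -- Step 6: conclude
  rw [div_le_iff₀ (Real.rpow_pos_of_pos hDfpos _)]
  have h2e : (2:ℝ) ^ e ≤ 2 ^ (1 / q) := by
    refine Real.rpow_le_rpow_of_exponent_le one_le_two ?_
    rw [hediff]
    have : 0 < 1 / p := by positivity
    linarith
  have hDfe : Df ^ e = Df ^ (1 / q) / Df ^ (1 / p) := by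
    rw [← Real.rpow_sub hDfpos, ← hediff]
  calc Nh ^ (1 / q) ≤ α * Nf ^ (1 / p) * 2 ^ e * (S.card : ℝ) ^ e * Df ^ e := step5
    _ ≤ α * Nf ^ (1 / p) * 2 ^ (1 / q) * (S.card : ℝ) ^ e * Df ^ e := by
        refine mul_le_mul_of_nonneg_right (mul_le_mul_of_nonneg_right
          (mul_le_mul_of_nonneg_left h2e ?_) ?_) ?_
        · exact mul_nonneg hα0.le (Real.rpow_nonneg hNfnn _)
        · exact Real.rpow_nonneg hcard _
        · exact Real.rpow_nonneg hDfpos.le _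
    _ = 2 ^ (1 / q) * (S.card : ℝ) ^ e * α * (Nf ^ (1 / p) / Df ^ (1 / p)) * Df ^ (1 / q) := by
        rw [hDfe]; ring
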